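/- Assume (H4): g(t) = 0 for all t ∈ [0,β]; C̃ = ∫_β^{1/2} g(t) dt > 0; and there exists a continuous function θ̃ : [rφ(β), R] → ℝ with θ̃(t) > 0 for all t ∈ [rφ(β), R] such that t f'(t) − f(t) ≥ θ̃(t) for all t ∈ [rφ(β), R]. Let u ∈ K satisfy r < ‖u‖ < R and the Nehari constraint ∫₀¹ u'(t)² dt = ∫₀¹ f(u(t)) g(t) u(t) dt. Then ∫₀¹ u'(t)² dt − ∫₀¹ f'(u(t)) g(t) u(t)² dt ≤ −2 C̃ r φ(β) · min_{s ∈ [rφ(β), R]} θ̃(s) < 0. -/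
import Mathlib


open Set MeasureTheory

/-- `φ(t) = t(1-2t)`. -/
noncomputable def phi (t : ℝ) : ℝ := t * (1 - 2 * t)

/-- The `H¹₀` (energetic) norm `‖u‖ = (∫₀¹ u'(t)² dt)^{1/2}`. -/
noncomputable def normH (u : ℝ → ℝ) : ℝ := Real.sqrt (∫ t in (0:ℝ)..1, deriv u t ^ 2)

/-- Membership in the cone `K`: continuously differentiable on `[0,1]`, vanishing at the
endpoints, symmetric about `1/2`, nondecreasing on `[0,1/2]`, and satisfying the Harnack
inequality `u(t) ≥ φ(t)‖u‖` on `[0,1/2]`. -/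
def memK (u : ℝ → ℝ) : Prop :=
  (∀ t ∈ Icc (0:ℝ) 1, DifferentiableAt ℝ u t) ∧
  ContinuousOn (deriv u) (Icc (0:ℝ) 1) ∧
  u 0 = 0 ∧ u 1 = 0 ∧
  (∀ t ∈ Icc (0:ℝ) 1, u t = u (1 - t)) ∧
  MonotoneOn u (Icc (0:ℝ) (1/2)) ∧
  (∀ t ∈ Icc (0:ℝ) (1/2), phi t * normH u ≤ u t)

open MeasureTheory in
/-- Product of a bounded measurable function with a function continuous on `[0,1]` is
interval integrable on any subinterval of `[0,1]`. -/
lemma aux_intInt (g c : ℝ → ℝ) (hg : Measurable g) (M : ℝ)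
    (hM : ∀ t ∈ Icc (0:ℝ) 1, |g t| ≤ M) (hc : ContinuousOn c (Icc (0:ℝ) 1))
    (a b : ℝ) (h0 : 0 ≤ a) (hab : a ≤ b) (h1 : b ≤ 1) :
    IntervalIntegrable (fun t => g t * c t) volume a b := by
  rw [intervalIntegrable_iff_integrableOn_Ioc_of_le hab]
  obtain ⟨C, hC⟩ := isCompact_Icc.exists_bound_of_continuousOn hc
  have hsub : Ioc a b ⊆ Icc (0:ℝ) 1 := fun t ht =>
    ⟨le_trans h0 ht.1.le, le_trans ht.2 h1⟩
  constructor
  · exact (hg.aestronglyMeasurable.restrict).mul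
      (((hc.mono hsub).aestronglyMeasurable measurableSet_Ioc))
  · apply MeasureTheory.HasFiniteIntegral.of_bounded (C := M * C)
    filter_upwards [ae_restrict_mem measurableSet_Ioc] with t ht
    have ht' := hsub ht
    have h1' := hM t ht'
    have h2' := hC t ht'
    have : ‖g t * c t‖ = |g t| * ‖c t‖ := by
      rw [norm_mul]; rfl
    rw [this]
    exact mul_le_mul h1' h2' (norm_nonneg _) (le_trans (abs_nonneg _) h1')

/-- Cauchy–Schwarz-type inequality for the interval integral of a continuous function. -/
lemma aux_CS (v : ℝ → ℝ) (hv : ContinuousOn v (Icc (0:ℝ) (1/2))) :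
    (∫ t in (0:ℝ)..(1/2), v t) ^ 2 ≤ (1/2) * ∫ t in (0:ℝ)..(1/2), (v t) ^ 2 := by
  set A := ∫ t in (0:ℝ)..(1/2), v t with hA
  have huIcc : uIcc (0:ℝ) (1/2) = Icc (0:ℝ) (1/2) := uIcc_of_le (by norm_num)
  have hv' : ContinuousOn v (uIcc (0:ℝ) (1/2)) := huIcc ▸ hv
  have hint1 : IntervalIntegrable v volume 0 (1/2) := hv'.intervalIntegrable
  have hint2 : IntervalIntegrable (fun t => (v t) ^ 2) volume 0 (1/2) :=
    (hv'.pow 2).intervalIntegrable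
  have h0 : (0:ℝ) ≤ ∫ t in (0:ℝ)..(1/2), (v t - 2 * A) ^ 2 :=
    intervalIntegral.integral_nonneg (by norm_num) (fun t _ => sq_nonneg _)
  have hexp : (∫ t in (0:ℝ)..(1/2), (v t - 2 * A) ^ 2)
      = (∫ t in (0:ℝ)..(1/2), (v t) ^ 2) - 2 * A ^ 2 := by
    have : ∀ t, (v t - 2 * A) ^ 2 = (v t) ^ 2 - (4 * A) * v t + 4 * A ^ 2 := by
      intro t; ring
    rw [intervalIntegral.integral_congr (g := fun t => (v t) ^ 2 - (4 * A) * v t + 4 * A ^ 2)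
      (fun t _ => this t)]
    rw [intervalIntegral.integral_add ((hint2.sub ((hint1.const_mul (4 * A))))) intervalIntegrable_const,
      intervalIntegral.integral_sub hint2 (hint1.const_mul (4 * A)),
      intervalIntegral.integral_const_mul, intervalIntegral.integral_const]
    simp only [smul_eq_mul]; ring
  linarith [hexp ▸ h0]

set_option maxHeartbeats 1000000 in
/-- Under condition (H4), for every `u` in the cone satisfying the Nehari
constraint with `r < ‖u‖ < R`, the quantity `E''(u)(u,u)` is negative, quantitatively. -/
theorem second_derivative_negative_of_H4
    (f : ℝ → ℝ) (hf : ContDiff ℝ 1 f)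
    (hfmono : MonotoneOn f (Ici (0:ℝ)))
    (hf0 : 0 ≤ f 0) (hfpos : ∀ t : ℝ, 0 < t → 0 < f t)
    (g : ℝ → ℝ) (hgnonneg : ∀ t ∈ Icc (0:ℝ) 1, 0 ≤ g t)
    (hgbdd : ∃ M : ℝ, ∀ t ∈ Icc (0:ℝ) 1, g t ≤ M)
    (hgmeas : Measurable g)
    (hgmono : MonotoneOn g (Icc (0:ℝ) (1/2)))
    (hgsymm : ∀ t ∈ Icc (0:ℝ) (1/2), g t = g (1 - t))
    (r R : ℝ) (hr : 0 < r) (hrR : r < R)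
    (β : ℝ) (hβ : β ∈ Ioo (0:ℝ) (1/4))
    (Ctil : ℝ) (hCtil : Ctil = ∫ t in β..(1/2:ℝ), g t) (hCpos : 0 < Ctil)
    -- condition (H4)
    (hg0 : ∀ t ∈ Icc (0:ℝ) β, g t = 0)
    (θtil : ℝ → ℝ) (hθcont : ContinuousOn θtil (Icc (r * phi β) R))
    (hθpos : ∀ t ∈ Icc (r * phi β) R, 0 < θtil t)
    (hAR : ∀ t ∈ Icc (r * phi β) R, θtil t ≤ t * deriv f t - f t)
    -- u in the cone, localized, satisfying the Nehari constraint
    (u : ℝ → ℝ) (hu : memK u) (hur : r < normH u) (huR : normH u < R)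
    (hNehari : (∫ t in (0:ℝ)..1, deriv u t ^ 2) = ∫ t in (0:ℝ)..1, f (u t) * g t * u t) :
    (∫ t in (0:ℝ)..1, deriv u t ^ 2) - (∫ t in (0:ℝ)..1, deriv f (u t) * g t * u t ^ 2) ≤
      -2 * Ctil * r * phi β * sInf (θtil '' Icc (r * phi β) R) ∧
    -2 * Ctil * r * phi β * sInf (θtil '' Icc (r * phi β) R) < 0 := by
  obtain ⟨hdiff, hdcont, hu0, hu1, hsymm, hmono, hharnack⟩ := hu
  obtain ⟨hβ0, hβ4⟩ := hβ
  obtain ⟨M, hM⟩ := hgbdd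
  have hMabs : ∀ t ∈ Icc (0:ℝ) 1, |g t| ≤ M := fun t ht => by
    rw [abs_of_nonneg (hgnonneg t ht)]; exact hM t ht
  -- basic positivity facts
  have hφβ : 0 < phi β := by unfold phi; nlinarith
  have hφβ1 : phi β < 1 := by unfold phi; nlinarith
  have hrφ : 0 < r * phi β := mul_pos hr hφβ
  have hrφR : r * phi β ≤ R := by nlinarith
  -- the infimum m is attained and positive
  set S := Icc (r * phi β) R with hS
  obtain ⟨x₀, hx₀S, hmin⟩ := isCompact_Icc.exists_isMinOn (nonempty_Icc.mpr hrφR) hθcont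
  set m := sInf (θtil '' S) with hmdef
  have hm_eq : m = θtil x₀ := by
    apply IsLeast.csInf_eq
    exact ⟨⟨x₀, hx₀S, rfl⟩, by rintro y ⟨t, ht, rfl⟩; exact hmin ht⟩
  have hm_pos : 0 < m := hm_eq ▸ hθpos x₀ hx₀S
  have hm_le : ∀ t ∈ S, m ≤ θtil t := fun t ht => hm_eq ▸ hmin ht
  -- continuity of u
  have hu_cont : ContinuousOn u (Icc (0:ℝ) 1) :=
    fun t ht => (hdiff t ht).continuousAt.continuousWithinAt
  -- norm squared
  have hIpos : (0:ℝ) ≤ ∫ t in (0:ℝ)..1, deriv u t ^ 2 :=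
    intervalIntegral.integral_nonneg (by norm_num) (fun t _ => sq_nonneg _)
  -- u(1/2) ≤ normH u
  have hdc2 : ContinuousOn (deriv u) (Icc (0:ℝ) (1/2)) :=
    hdcont.mono (Icc_subset_Icc le_rfl (by norm_num))
  have hFTC : ∫ t in (0:ℝ)..(1/2), deriv u t = u (1/2) := by
    have huIcc : uIcc (0:ℝ) (1/2) = Icc (0:ℝ) (1/2) := uIcc_of_le (by norm_num)
    have h := intervalIntegral.integral_deriv_eq_sub
      (f := u) (a := 0) (b := 1/2)
      (fun x hx => hdiff x (by rw [huIcc] at hx; exact ⟨hx.1, le_trans hx.2 (by norm_num)⟩))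
      ((huIcc ▸ hdc2).intervalIntegrable)
    rw [h, hu0, sub_zero]
  have hd2_int_half : IntervalIntegrable (fun t => deriv u t ^ 2) volume 0 (1/2) := by
    apply ContinuousOn.intervalIntegrable
    rw [uIcc_of_le (by norm_num : (0:ℝ) ≤ 1/2)]
    exact hdc2.pow 2
  have hd2_int_half' : IntervalIntegrable (fun t => deriv u t ^ 2) volume (1/2) 1 := by
    apply ContinuousOn.intervalIntegrable
    rw [uIcc_of_le (by norm_num : (1/2:ℝ) ≤ 1)]
    exact (hdcont.mono (Icc_subset_Icc (by norm_num) le_rfl)).pow 2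
  have hhalf_le : (∫ t in (0:ℝ)..(1/2), deriv u t ^ 2) ≤ ∫ t in (0:ℝ)..1, deriv u t ^ 2 := by
    rw [← intervalIntegral.integral_add_adjacent_intervals hd2_int_half hd2_int_half']
    have : (0:ℝ) ≤ ∫ t in (1/2:ℝ)..1, deriv u t ^ 2 :=
      intervalIntegral.integral_nonneg (by norm_num) (fun t _ => sq_nonneg _)
    linarith
  have huhalf_sq : (u (1/2)) ^ 2 ≤ ∫ t in (0:ℝ)..1, deriv u t ^ 2 := by
    have hcs := aux_CS (deriv u) hdc2
    rw [hFTC] at hcs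
    nlinarith
  have huhalf_nonneg : 0 ≤ u (1/2) := by
    have := hmono (left_mem_Icc.mpr (by norm_num) : (0:ℝ) ∈ Icc (0:ℝ) (1/2))
      (right_mem_Icc.mpr (by norm_num)) (by norm_num)
    rw [hu0] at this; exact this
  have huhalf_le : u (1/2) ≤ normH u := by
    have := Real.sqrt_le_sqrt huhalf_sq
    rwa [Real.sqrt_sq huhalf_nonneg] at this
  -- core bound on [β, 1/2]
  have hcore : ∀ s ∈ Icc β (1/2), r * phi β ≤ u s ∧ u s ≤ R := by
    intro s hs
    have hsIcc : s ∈ Icc (0:ℝ) (1/2) := ⟨le_trans hβ0.le hs.1, hs.2⟩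
    have hβIcc : β ∈ Icc (0:ℝ) (1/2) := ⟨hβ0.le, by norm_num; linarith⟩
    constructor
    · have h1 : phi β * normH u ≤ u β := hharnack β hβIcc
      have h2 : u β ≤ u s := hmono hβIcc hsIcc hs.1
      nlinarith
    · have h2 : u s ≤ u (1/2) := hmono hsIcc (right_mem_Icc.mpr (by norm_num)) hs.2
      linarith
  -- bound on [β, 1-β] via symmetry
  have hu_mem : ∀ t ∈ Icc β (1 - β), r * phi β ≤ u t ∧ u t ≤ R := by
    intro t ht
    rcases le_or_gt t (1/2) with h | h
    · exact hcore t ⟨ht.1, h⟩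
    · have ht01 : t ∈ Icc (0:ℝ) 1 := ⟨le_trans hβ0.le ht.1, by linarith [ht.2]⟩
      have hsy : u t = u (1 - t) := hsymm t ht01
      rw [hsy]
      exact hcore (1 - t) ⟨by linarith [ht.2], by linarith⟩
  -- g vanishes outside [β, 1-β]
  have hg_zero : ∀ t ∈ Icc (0:ℝ) 1, t ∉ Icc β (1 - β) → g t = 0 := by
    intro t ht hnt
    rcases not_and_or.mp hnt with h | h
    · exact hg0 t ⟨ht.1, le_of_not_ge h⟩
    · push_neg at h
      have h1t : 1 - t ∈ Icc (0:ℝ) (1/2) := ⟨by linarith [ht.2], by linarith⟩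
      have := hgsymm (1 - t) h1t
      rw [show (1 : ℝ) - (1 - t) = t by ring] at this
      rw [← this]
      exact hg0 (1 - t) ⟨by linarith [ht.2], by linarith⟩
  -- pointwise inequality
  have hpt : ∀ t ∈ Icc (0:ℝ) 1,
      f (u t) * g t * u t - deriv f (u t) * g t * u t ^ 2 ≤ g t * (-(r * phi β * m)) := by
    intro t ht
    by_cases hgt : t ∈ Icc β (1 - β)
    · obtain ⟨h1, h2⟩ := hu_mem t hgt
      have huS : u t ∈ S := ⟨h1, h2⟩
      have hθ : m ≤ u t * deriv f (u t) - f (u t) :=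
        le_trans (hm_le (u t) huS) (hAR (u t) huS)
      have hg0' : 0 ≤ g t := hgnonneg t ht
      have hut0 : 0 ≤ u t := le_trans hrφ.le h1
      have hkey : r * phi β * m ≤ u t * (u t * deriv f (u t) - f (u t)) :=
        mul_le_mul h1 hθ hm_pos.le hut0
      nlinarith [mul_le_mul_of_nonneg_left hkey hg0']
    · rw [hg_zero t ht hgt]; ring_nf; simp
  -- integrability
  have hint_fg : IntervalIntegrable (fun t => f (u t) * g t * u t) volume 0 1 := by
    have hc : ContinuousOn (fun t => f (u t) * u t) (Icc (0:ℝ) 1) :=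
      ((hf.continuous.comp_continuousOn hu_cont).mul hu_cont)
    have h := aux_intInt g (fun t => f (u t) * u t) hgmeas M hMabs hc 0 1 le_rfl (by norm_num) le_rfl
    have : (fun t => f (u t) * g t * u t) = fun t => g t * (f (u t) * u t) := by
      funext t; ring
    rwa [this]
  have hint_f'g : IntervalIntegrable (fun t => deriv f (u t) * g t * u t ^ 2) volume 0 1 := by
    have hdf : Continuous (deriv f) := (hf.iterate_deriv' 0 1).continuous
    have hc : ContinuousOn (fun t => deriv f (u t) * u t ^ 2) (Icc (0:ℝ) 1) :=
      ((hdf.comp_continuousOn hu_cont).mul (hu_cont.pow 2))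
    have h := aux_intInt g (fun t => deriv f (u t) * u t ^ 2) hgmeas M hMabs hc 0 1 le_rfl (by norm_num) le_rfl
    have : (fun t => deriv f (u t) * g t * u t ^ 2) = fun t => g t * (deriv f (u t) * u t ^ 2) := by
      funext t; ring
    rwa [this]
  have hint_g : ∀ a b : ℝ, 0 ≤ a → a ≤ b → b ≤ 1 → IntervalIntegrable g volume a b := by
    intro a b h0 hab h1
    have h := aux_intInt g (fun _ => 1) hgmeas M hMabs continuousOn_const a b h0 hab h1
    simpa using h
  have hint_gc : IntervalIntegrable (fun t => g t * (-(r * phi β * m))) volume 0 1 :=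
    (hint_g 0 1 le_rfl (by norm_num) le_rfl).mul_const _
  -- total mass of g equals 2 * Ctil
  have hgmass : (∫ t in (0:ℝ)..1, g t) = 2 * Ctil := by
    have h0β : (∫ t in (0:ℝ)..β, g t) = 0 := by
      rw [intervalIntegral.integral_congr (g := fun _ => (0:ℝ))
        (fun t ht => hg0 t (by rwa [uIcc_of_le hβ0.le] at ht))]
      simp
    have hhalf : (∫ t in (0:ℝ)..(1/2:ℝ), g t) = Ctil := by
      rw [← intervalIntegral.integral_add_adjacent_intervals
        (hint_g 0 β le_rfl hβ0.le (by linarith))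
        (hint_g β (1/2) hβ0.le (by linarith) (by norm_num)), h0β, hCtil]
      ring
    have hsym : (∫ t in (1/2:ℝ)..1, g t) = ∫ t in (0:ℝ)..(1/2:ℝ), g t := by
      have : (∫ t in (1/2:ℝ)..1, g t) = ∫ t in (1/2:ℝ)..1, g (1 - t) := by
        apply intervalIntegral.integral_congr
        intro t ht
        rw [uIcc_of_le (by norm_num : (1/2:ℝ) ≤ 1)] at ht
        have h1t : 1 - t ∈ Icc (0:ℝ) (1/2) := ⟨by linarith [ht.2], by linarith [ht.1]⟩
        have := hgsymm (1 - t) h1t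
        rw [show (1 : ℝ) - (1 - t) = t by ring] at this
        exact this.symm
      rw [this, intervalIntegral.integral_comp_sub_left g 1]
      norm_num
    rw [← intervalIntegral.integral_add_adjacent_intervals
      (hint_g 0 (1/2) le_rfl (by norm_num) (by norm_num))
      (hint_g (1/2) 1 (by norm_num) (by norm_num) le_rfl), hhalf, hsym, hhalf]
    ring
  -- main chain
  constructor
  · rw [hNehari]
    have hsub : (∫ t in (0:ℝ)..1, f (u t) * g t * u t) - (∫ t in (0:ℝ)..1, deriv f (u t) * g t * u t ^ 2)
        = ∫ t in (0:ℝ)..1, (f (u t) * g t * u t - deriv f (u t) * g t * u t ^ 2) :=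
      (intervalIntegral.integral_sub hint_fg hint_f'g).symm
    rw [hsub]
    have hmono' := intervalIntegral.integral_mono_on (by norm_num : (0:ℝ) ≤ 1)
      (hint_fg.sub hint_f'g) hint_gc hpt
    have hrhs : (∫ t in (0:ℝ)..1, g t * (-(r * phi β * m))) = -2 * Ctil * r * phi β * m := by
      rw [intervalIntegral.integral_mul_const, hgmass]; ring
    calc (∫ t in (0:ℝ)..1, (f (u t) * g t * u t - deriv f (u t) * g t * u t ^ 2))
        ≤ ∫ t in (0:ℝ)..1, g t * (-(r * phi β * m)) := hmono'
      _ = -2 * Ctil * r * phi β * m := hrhs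
  · have : 0 < 2 * Ctil * r * phi β * m := by positivity
    linarith
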